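/- (Modular transformation of the Kronecker series) Let (a b; c d) ∈ SL₂(ℤ), let τ be in the upper half-plane, and let ξ, α ∈ ℂ be such that both Kronecker series values below are defined (i.e. the relevant theta denominators are nonzero). Then F_{(aτ+b)/(cτ+d)}( ξ/(cτ+d), α/(cτ+d) ) = (cτ+d) · e^{2πi c ξ α/(cτ+d)} · F_τ(ξ, α). -/

import Mathlib

noncomputable section

/-- The odd Jacobi theta function
`θ_τ(ξ) = Σ_{n ∈ ℤ} (-1)^n e^{πiτ(n+1/2)²} e^{2πi(n+1/2)ξ}`. -/
def theta (τ ξ : ℂ) : ℂ :=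
  ∑' n : ℤ, (-1 : ℂ) ^ n * Complex.exp (Real.pi * Complex.I * τ * ((n : ℂ) + 1 / 2) ^ 2) *
    Complex.exp (2 * Real.pi * Complex.I * ((n : ℂ) + 1 / 2) * ξ)

/-- The Kronecker series `F_τ(ξ, α) = θ'_τ(0)·θ_τ(ξ+α)/(θ_τ(ξ)·θ_τ(α))`. -/
def kronecker (τ ξ α : ℂ) : ℂ :=
  deriv (theta τ) 0 * theta τ (ξ + α) / (theta τ ξ * theta τ α)

open Complex

lemma theta_eq (τ ξ : ℂ) :
    theta τ ξ = Complex.exp (Real.pi * Complex.I * τ / 4 + Real.pi * Complex.I * ξ) *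
      jacobiTheta₂ (ξ + (τ + 1) / 2) τ := by
  rw [jacobiTheta₂, ← tsum_mul_left]
  refine tsum_congr fun n ↦ ?_
  have h1 : ((-1 : ℂ) ^ n) = Complex.exp ((n : ℂ) * (Real.pi * Complex.I)) := by
    rw [Complex.exp_int_mul, Complex.exp_pi_mul_I]
  rw [h1, jacobiTheta₂_term, ← Complex.exp_add, ← Complex.exp_add, ← Complex.exp_add]
  congr 1
  ring

lemma theta_T (m : ℤ) (τ ξ : ℂ) :
    theta (τ + m) ξ = Complex.exp (Real.pi * Complex.I * m / 4) * theta τ ξ := by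
  rw [theta, theta, ← tsum_mul_left]
  refine tsum_congr fun n ↦ ?_
  have key : Complex.exp (Real.pi * Complex.I * (m : ℂ) * ((n : ℂ) + 1 / 2) ^ 2) =
      Complex.exp (Real.pi * Complex.I * m / 4) := by
    have he : Even (m * (n ^ 2 + n)) := by
      have := (Int.even_mul_succ_self n).mul_left m
      rwa [show n * (n + 1) = n ^ 2 + n by ring] at this
    obtain ⟨k, hk⟩ := he
    have h : (Real.pi * Complex.I * (m : ℂ) * ((n : ℂ) + 1 / 2) ^ 2) =
        ((k : ℂ)) * (2 * Real.pi * Complex.I) + Real.pi * Complex.I * m / 4 := by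
      have : ((m * (n ^ 2 + n) : ℤ) : ℂ) = ((k : ℂ)) + ((k : ℂ)) := by
        rw [hk]; push_cast; ring
      push_cast at this ⊢
      linear_combination (Real.pi * Complex.I : ℂ) * this
    rw [h, Complex.exp_add, Complex.exp_int_mul_two_pi_mul_I, one_mul]
  calc (-1 : ℂ) ^ n * Complex.exp (Real.pi * Complex.I * (τ + m) * ((n : ℂ) + 1 / 2) ^ 2) *
        Complex.exp (2 * Real.pi * Complex.I * ((n : ℂ) + 1 / 2) * ξ)
      = Complex.exp (Real.pi * Complex.I * (m : ℂ) * ((n : ℂ) + 1 / 2) ^ 2) *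
        ((-1 : ℂ) ^ n * Complex.exp (Real.pi * Complex.I * τ * ((n : ℂ) + 1 / 2) ^ 2) *
        Complex.exp (2 * Real.pi * Complex.I * ((n : ℂ) + 1 / 2) * ξ)) := by
        rw [mul_add (Real.pi * Complex.I), add_mul, Complex.exp_add]; ring
    _ = _ := by rw [key]

lemma theta_odd (τ ξ : ℂ) : theta τ (-ξ) = - theta τ ξ := by
  have he := (((Equiv.neg ℤ).trans (Equiv.subRight 1)).tsum_eq
    (f := fun n : ℤ => (-1 : ℂ) ^ n * Complex.exp (Real.pi * Complex.I * τ * ((n : ℂ) + 1 / 2) ^ 2) *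
    Complex.exp (2 * Real.pi * Complex.I * ((n : ℂ) + 1 / 2) * (-ξ)))).symm
  rw [theta, he]
  have : ∀ n : ℤ, ((-1 : ℂ) ^ (((Equiv.neg ℤ).trans (Equiv.subRight 1)) n) *
      Complex.exp (Real.pi * Complex.I * τ * (((((Equiv.neg ℤ).trans (Equiv.subRight 1)) n : ℤ) : ℂ) + 1 / 2) ^ 2) *
      Complex.exp (2 * Real.pi * Complex.I * (((((Equiv.neg ℤ).trans (Equiv.subRight 1)) n : ℤ) : ℂ) + 1 / 2) * (-ξ)))
      = -((-1 : ℂ) ^ n * Complex.exp (Real.pi * Complex.I * τ * ((n : ℂ) + 1 / 2) ^ 2) *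
      Complex.exp (2 * Real.pi * Complex.I * ((n : ℂ) + 1 / 2) * ξ)) := by
    intro n
    simp only [Equiv.trans_apply, Equiv.neg_apply, Equiv.subRight_apply]
    have h1 : (-1 : ℂ) ^ (-n - 1) = -(-1 : ℂ) ^ n := by
      rcases Int.even_or_odd n with h | h
      · have h' : Odd (-n - 1) := by
          rw [Int.even_iff] at h; rw [Int.odd_iff]; omega
        rw [h'.neg_one_zpow, h.neg_one_zpow]
      · have h' : Even (-n - 1) := by
          rw [Int.odd_iff] at h; rw [Int.even_iff]; omega
        rw [h'.neg_one_zpow, h.neg_one_zpow]; norm_num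
    have h2 : ((-n - 1 : ℤ) : ℂ) + 1 / 2 = -((n : ℂ) + 1 / 2) := by push_cast; ring
    have h3 : 2 * (Real.pi : ℂ) * Complex.I * (-((n : ℂ) + 1 / 2)) * (-ξ)
        = 2 * Real.pi * Complex.I * ((n : ℂ) + 1 / 2) * ξ := by ring
    rw [h1, h2, neg_sq, h3]
    ring
  rw [tsum_congr this, tsum_neg, theta]

lemma theta_S (τ : ℂ) (hτ : 0 < τ.im) (ξ : ℂ) :
    theta (-1/τ) (ξ/τ) = (-Complex.I*τ) ^ (1/2 : ℂ) * Complex.exp (-(Real.pi*Complex.I)/2) *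
      Complex.exp (Real.pi*Complex.I*ξ^2/τ) * theta τ ξ := by
  have hτ0 : τ ≠ 0 := fun h => by simp [h] at hτ
  have hbase : (-Complex.I*τ) ≠ 0 := by
    simp [Complex.I_ne_zero, hτ0]
  have hpow : (-Complex.I*τ) ^ (1/2 : ℂ) ≠ 0 := by
    simp [Complex.cpow_eq_zero_iff, hbase, hτ0]
  have hfe := jacobiTheta₂_functional_equation (ξ + (τ-1)/2) τ
  have hper : jacobiTheta₂ (ξ + (τ+1)/2) τ = jacobiTheta₂ (ξ + (τ-1)/2) τ := by
    have := jacobiTheta₂_add_left (ξ + (τ-1)/2) τ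
    rwa [show ξ + (τ-1)/2 + 1 = ξ + (τ+1)/2 by ring] at this
  have hJ : jacobiTheta₂ ((ξ + (τ-1)/2)/τ) (-1/τ) =
      (-Complex.I*τ) ^ (1/2 : ℂ) * Complex.exp (Real.pi*Complex.I*(ξ + (τ-1)/2)^2/τ) *
        jacobiTheta₂ (ξ + (τ+1)/2) τ := by
    rw [hper, hfe, ← mul_assoc, ← mul_assoc]
    rw [show (-Complex.I*τ) ^ (1/2 : ℂ) * Complex.exp (Real.pi*Complex.I*(ξ + (τ-1)/2)^2/τ) *
      (1 / (-Complex.I*τ) ^ (1/2 : ℂ)) = Complex.exp (Real.pi*Complex.I*(ξ + (τ-1)/2)^2/τ) *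
      ((-Complex.I*τ) ^ (1/2 : ℂ) / (-Complex.I*τ) ^ (1/2 : ℂ)) by ring, div_self hpow, mul_one,
      ← Complex.exp_add]
    rw [show Real.pi*Complex.I*(ξ + (τ-1)/2)^2/τ + -Real.pi*Complex.I*(ξ + (τ-1)/2)^2/τ = 0 by ring,
      Complex.exp_zero, one_mul]
  rw [theta_eq, theta_eq, show ξ/τ + (-1/τ + 1)/2 = (ξ + (τ-1)/2)/τ by field_simp; ring, hJ]
  rw [show Complex.exp (Real.pi * Complex.I * (-1/τ) / 4 + Real.pi * Complex.I * (ξ/τ)) *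
      ((-Complex.I*τ) ^ (1/2 : ℂ) * Complex.exp (Real.pi*Complex.I*(ξ + (τ-1)/2)^2/τ) *
        jacobiTheta₂ (ξ + (τ+1)/2) τ) =
      (-Complex.I*τ) ^ (1/2 : ℂ) * (Complex.exp (Real.pi * Complex.I * (-1/τ) / 4 + Real.pi * Complex.I * (ξ/τ)) *
        Complex.exp (Real.pi*Complex.I*(ξ + (τ-1)/2)^2/τ)) * jacobiTheta₂ (ξ + (τ+1)/2) τ by ring]
  rw [← Complex.exp_add]
  rw [show (-Complex.I*τ) ^ (1/2 : ℂ) * Complex.exp (-(Real.pi*Complex.I)/2) *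
      Complex.exp (Real.pi*Complex.I*ξ^2/τ) *
      (Complex.exp (Real.pi * Complex.I * τ / 4 + Real.pi * Complex.I * ξ) *
        jacobiTheta₂ (ξ + (τ+1)/2) τ) =
      (-Complex.I*τ) ^ (1/2 : ℂ) * (Complex.exp (-(Real.pi*Complex.I)/2) *
        Complex.exp (Real.pi*Complex.I*ξ^2/τ) *
        Complex.exp (Real.pi * Complex.I * τ / 4 + Real.pi * Complex.I * ξ)) *
        jacobiTheta₂ (ξ + (τ+1)/2) τ by ring]
  rw [← Complex.exp_add, ← Complex.exp_add]
  congr 2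
  · congr 1
    field_simp
    ring

lemma denom_ne_zero' {a b c d : ℤ} (h : a * d - b * c = 1) {τ : ℂ} (hτ : 0 < τ.im) :
    (c : ℂ) * τ + (d : ℂ) ≠ 0 := by
  rcases eq_or_ne c 0 with hc | hc
  · subst hc
    simp only [Int.cast_zero, zero_mul, zero_add, ne_eq, Int.cast_eq_zero]
    intro hd; subst hd; simp at h
  · intro h0
    have h1 := congrArg Complex.im h0
    simp only [Complex.add_im, Complex.mul_im, Complex.intCast_im, Complex.intCast_re,
      zero_mul, add_zero, zero_add, Complex.zero_im, mul_zero] at h1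
    have hc' : (c : ℝ) ≠ 0 := Int.cast_ne_zero.mpr hc
    exact absurd h1 (mul_ne_zero hc' (ne_of_gt hτ))

lemma im_moebius_pos {a b c d : ℤ} (h : a * d - b * c = 1) {τ : ℂ} (hτ : 0 < τ.im) :
    0 < (((a : ℂ) * τ + b) / ((c : ℂ) * τ + d)).im := by
  have hden := denom_ne_zero' h hτ
  have hns : 0 < Complex.normSq ((c : ℂ) * τ + d) := Complex.normSq_pos.mpr hden
  have key : (((a : ℂ) * τ + b) / ((c : ℂ) * τ + d)).im
      = τ.im / Complex.normSq ((c : ℂ) * τ + d) := by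
    rw [Complex.div_im]
    simp only [Complex.add_im, Complex.add_re, Complex.mul_im, Complex.mul_re,
      Complex.intCast_im, Complex.intCast_re, zero_mul, add_zero, zero_add, mul_zero, sub_zero]
    have hdet : (a : ℝ) * d - b * c = 1 := by exact_mod_cast h
    field_simp
    linear_combination hdet
  rw [key]
  positivity

def ThetaLaw (a b c d : ℤ) : Prop :=
  ∀ τ : ℂ, 0 < τ.im → ∃ μ : ℂ, μ ≠ 0 ∧ ∀ ξ : ℂ,
    theta (((a : ℂ) * τ + b) / ((c : ℂ) * τ + d)) (ξ / ((c : ℂ) * τ + d)) =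
      μ * Complex.exp (Real.pi * Complex.I * c * ξ ^ 2 / ((c : ℂ) * τ + d)) * theta τ ξ

lemma ThetaLaw.mul {a1 b1 c1 d1 a2 b2 c2 d2 : ℤ}
    (h1 : a1 * d1 - b1 * c1 = 1) (h2 : a2 * d2 - b2 * c2 = 1)
    (H1 : ThetaLaw a1 b1 c1 d1) (H2 : ThetaLaw a2 b2 c2 d2) :
    ThetaLaw (a1 * a2 + b1 * c2) (a1 * b2 + b1 * d2) (c1 * a2 + d1 * c2) (c1 * b2 + d1 * d2) := by
  intro τ hτ
  have hdet12 : (a1 * a2 + b1 * c2) * (c1 * b2 + d1 * d2)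
      - (a1 * b2 + b1 * d2) * (c1 * a2 + d1 * c2) = 1 := by
    linear_combination (a2 * d2 - b2 * c2) * h1 + h2
  have hc2 : (a2 : ℂ) * d2 - b2 * c2 = 1 := by exact_mod_cast h2
  have hj2 : (c2 : ℂ) * τ + d2 ≠ 0 := denom_ne_zero' h2 hτ
  have hσ : 0 < (((a2 : ℂ) * τ + b2) / ((c2 : ℂ) * τ + d2)).im := im_moebius_pos h2 hτ
  obtain ⟨μ1, hμ1, law1⟩ := H1 _ hσ
  obtain ⟨μ2, hμ2, law2⟩ := H2 τ hτ
  refine ⟨μ1 * μ2, mul_ne_zero hμ1 hμ2, fun ξ => ?_⟩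
  have hj12 : ((c1 * a2 + d1 * c2 : ℤ) : ℂ) * τ + ((c1 * b2 + d1 * d2 : ℤ) : ℂ) ≠ 0 :=
    denom_ne_zero' hdet12 hτ
  have hj1' : (c1 : ℂ) * (((a2 : ℂ) * τ + b2) / ((c2 : ℂ) * τ + d2)) + d1 =
      (((c1 * a2 + d1 * c2 : ℤ) : ℂ) * τ + ((c1 * b2 + d1 * d2 : ℤ) : ℂ)) / ((c2 : ℂ) * τ + d2) := by
    rw [eq_div_iff hj2, add_mul, mul_assoc, div_mul_cancel₀ _ hj2]
    push_cast
    ring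
  have hj1'ne : (c1 : ℂ) * (((a2 : ℂ) * τ + b2) / ((c2 : ℂ) * τ + d2)) + d1 ≠ 0 := by
    rw [hj1']; exact div_ne_zero hj12 hj2
  have hτarg : ((a1 : ℂ) * (((a2 : ℂ) * τ + b2) / ((c2 : ℂ) * τ + d2)) + b1) /
        ((c1 : ℂ) * (((a2 : ℂ) * τ + b2) / ((c2 : ℂ) * τ + d2)) + d1)
      = (((a1 * a2 + b1 * c2 : ℤ) : ℂ) * τ + ((a1 * b2 + b1 * d2 : ℤ) : ℂ)) /
        (((c1 * a2 + d1 * c2 : ℤ) : ℂ) * τ + ((c1 * b2 + d1 * d2 : ℤ) : ℂ)) := by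
    have hN : (a1 : ℂ) * (((a2 : ℂ) * τ + b2) / ((c2 : ℂ) * τ + d2)) + b1 =
        (((a1 * a2 + b1 * c2 : ℤ) : ℂ) * τ + ((a1 * b2 + b1 * d2 : ℤ) : ℂ)) / ((c2 : ℂ) * τ + d2) := by
      rw [eq_div_iff hj2, add_mul, mul_assoc, div_mul_cancel₀ _ hj2]
      push_cast
      ring
    rw [hN, hj1', div_div_div_cancel_right₀ hj2]
  have hξarg : ξ / ((c2 : ℂ) * τ + d2) /
        ((c1 : ℂ) * (((a2 : ℂ) * τ + b2) / ((c2 : ℂ) * τ + d2)) + d1)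
      = ξ / (((c1 * a2 + d1 * c2 : ℤ) : ℂ) * τ + ((c1 * b2 + d1 * d2 : ℤ) : ℂ)) := by
    rw [div_div, hj1',
      show ((c2 : ℂ) * τ + d2) * ((((c1 * a2 + d1 * c2 : ℤ) : ℂ) * τ + ((c1 * b2 + d1 * d2 : ℤ) : ℂ)) /
        ((c2 : ℂ) * τ + d2)) = (((c1 * a2 + d1 * c2 : ℤ) : ℂ) * τ + ((c1 * b2 + d1 * d2 : ℤ) : ℂ))
        from by field_simp]
  have expkey : Complex.exp (Real.pi * Complex.I * c1 * (ξ / ((c2 : ℂ) * τ + d2)) ^ 2 /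
        ((c1 : ℂ) * (((a2 : ℂ) * τ + b2) / ((c2 : ℂ) * τ + d2)) + d1)) *
      Complex.exp (Real.pi * Complex.I * c2 * ξ ^ 2 / ((c2 : ℂ) * τ + d2)) =
      Complex.exp (Real.pi * Complex.I * ((c1 * a2 + d1 * c2 : ℤ) : ℂ) * ξ ^ 2 /
        (((c1 * a2 + d1 * c2 : ℤ) : ℂ) * τ + ((c1 * b2 + d1 * d2 : ℤ) : ℂ))) := by
    rw [hj1', ← Complex.exp_add]
    congr 1
    have hsq : ((c2 : ℂ) * τ + d2) ^ 2 / ((c2 : ℂ) * τ + d2) = (c2 : ℂ) * τ + d2 := by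
      rw [sq, mul_div_assoc, div_self hj2, mul_one]
    have hE1 : (ξ / ((c2 : ℂ) * τ + d2)) ^ 2 /
        ((((c1 * a2 + d1 * c2 : ℤ) : ℂ) * τ + ((c1 * b2 + d1 * d2 : ℤ) : ℂ)) / ((c2 : ℂ) * τ + d2))
        = ξ ^ 2 / (((c2 : ℂ) * τ + d2) *
          (((c1 * a2 + d1 * c2 : ℤ) : ℂ) * τ + ((c1 * b2 + d1 * d2 : ℤ) : ℂ))) := by
      rw [div_pow, div_div_div_comm, hsq, div_div, mul_comm]
    rw [mul_div_assoc, hE1]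
    have hj12' := hj12
    push_cast at hj12' ⊢
    rw [mul_div_assoc', div_add_div _ _ (mul_ne_zero hj2 hj12') hj2,
      div_eq_div_iff (mul_ne_zero (mul_ne_zero hj2 hj12') hj2) hj12']
    linear_combination (-(Real.pi * Complex.I * ξ ^ 2 * (c1:ℂ))) * (((c2:ℂ)*τ+(d2:ℂ)) *
      (((c1:ℂ)*(a2:ℂ) + (d1:ℂ)*(c2:ℂ))*τ + ((c1:ℂ)*(b2:ℂ) + (d1:ℂ)*(d2:ℂ)))) * hc2
  calc theta ((((a1 * a2 + b1 * c2 : ℤ) : ℂ) * τ + ((a1 * b2 + b1 * d2 : ℤ) : ℂ)) /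
        (((c1 * a2 + d1 * c2 : ℤ) : ℂ) * τ + ((c1 * b2 + d1 * d2 : ℤ) : ℂ)))
        (ξ / (((c1 * a2 + d1 * c2 : ℤ) : ℂ) * τ + ((c1 * b2 + d1 * d2 : ℤ) : ℂ)))
      = theta (((a1 : ℂ) * (((a2 : ℂ) * τ + b2) / ((c2 : ℂ) * τ + d2)) + b1) /
          ((c1 : ℂ) * (((a2 : ℂ) * τ + b2) / ((c2 : ℂ) * τ + d2)) + d1))
          (ξ / ((c2 : ℂ) * τ + d2) /
            ((c1 : ℂ) * (((a2 : ℂ) * τ + b2) / ((c2 : ℂ) * τ + d2)) + d1)) := by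
        rw [hτarg, hξarg]
    _ = μ1 * Complex.exp (Real.pi * Complex.I * c1 * (ξ / ((c2 : ℂ) * τ + d2)) ^ 2 /
          ((c1 : ℂ) * (((a2 : ℂ) * τ + b2) / ((c2 : ℂ) * τ + d2)) + d1)) *
        theta (((a2 : ℂ) * τ + b2) / ((c2 : ℂ) * τ + d2)) (ξ / ((c2 : ℂ) * τ + d2)) :=
        law1 (ξ / ((c2 : ℂ) * τ + d2))
    _ = μ1 * Complex.exp (Real.pi * Complex.I * c1 * (ξ / ((c2 : ℂ) * τ + d2)) ^ 2 /
          ((c1 : ℂ) * (((a2 : ℂ) * τ + b2) / ((c2 : ℂ) * τ + d2)) + d1)) *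
        (μ2 * Complex.exp (Real.pi * Complex.I * c2 * ξ ^ 2 / ((c2 : ℂ) * τ + d2)) *
          theta τ ξ) := by rw [law2 ξ]
    _ = μ1 * μ2 * (Complex.exp (Real.pi * Complex.I * c1 * (ξ / ((c2 : ℂ) * τ + d2)) ^ 2 /
          ((c1 : ℂ) * (((a2 : ℂ) * τ + b2) / ((c2 : ℂ) * τ + d2)) + d1)) *
        Complex.exp (Real.pi * Complex.I * c2 * ξ ^ 2 / ((c2 : ℂ) * τ + d2))) * theta τ ξ := by
        ring
    _ = μ1 * μ2 * Complex.exp (Real.pi * Complex.I * ((c1 * a2 + d1 * c2 : ℤ) : ℂ) * ξ ^ 2 /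
          (((c1 * a2 + d1 * c2 : ℤ) : ℂ) * τ + ((c1 * b2 + d1 * d2 : ℤ) : ℂ))) * theta τ ξ := by
        rw [expkey]

lemma thetaLaw_T (m : ℤ) : ThetaLaw 1 m 0 1 := by
  intro τ hτ
  refine ⟨Complex.exp (Real.pi * Complex.I * m / 4), Complex.exp_ne_zero _, fun ξ => ?_⟩
  have h1 : ((1 : ℤ) : ℂ) * τ + (m : ℂ) = τ + m := by push_cast; ring
  have h2 : ((0 : ℤ) : ℂ) * τ + ((1 : ℤ) : ℂ) = 1 := by push_cast; ring
  rw [h2, h1, div_one, div_one]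
  rw [show Real.pi * Complex.I * ((0 : ℤ) : ℂ) * ξ ^ 2 / 1 = 0 by push_cast; ring,
    Complex.exp_zero, mul_one]
  exact theta_T m τ ξ

lemma thetaLaw_negT (m : ℤ) : ThetaLaw (-1) m 0 (-1) := by
  intro τ hτ
  refine ⟨-Complex.exp (-(Real.pi * Complex.I * m) / 4), neg_ne_zero.mpr (Complex.exp_ne_zero _),
    fun ξ => ?_⟩
  have h1 : (((-1 : ℤ) : ℂ) * τ + (m : ℂ)) / (((0 : ℤ) : ℂ) * τ + ((-1 : ℤ) : ℂ)) = τ - m := by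
    push_cast; ring
  have h2 : ξ / (((0 : ℤ) : ℂ) * τ + ((-1 : ℤ) : ℂ)) = -ξ := by push_cast; ring
  rw [h1, h2, theta_odd]
  rw [show Real.pi * Complex.I * ((0 : ℤ) : ℂ) * ξ ^ 2 / (((0 : ℤ) : ℂ) * τ + ((-1 : ℤ) : ℂ)) = 0
    by push_cast; ring, Complex.exp_zero, mul_one]
  have h3 := theta_T m (τ - m) ξ
  rw [sub_add_cancel] at h3
  rw [h3, show -Complex.exp (-(Real.pi * Complex.I * m) / 4) *
      (Complex.exp (Real.pi * Complex.I * m / 4) * theta (τ - m) ξ) =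
      -((Complex.exp (-(Real.pi * Complex.I * m) / 4) * Complex.exp (Real.pi * Complex.I * m / 4)) *
        theta (τ - m) ξ) by ring, ← Complex.exp_add,
    show -(Real.pi * Complex.I * m) / 4 + Real.pi * Complex.I * m / 4 = 0 by ring,
    Complex.exp_zero, one_mul]

lemma thetaLaw_S : ThetaLaw 0 (-1) 1 0 := by
  intro τ hτ
  have hτ0 : τ ≠ 0 := fun h => by simp [h] at hτ
  have hpow : (-Complex.I*τ) ^ (1/2 : ℂ) ≠ 0 := by
    simp [Complex.cpow_eq_zero_iff, Complex.I_ne_zero, hτ0]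
  refine ⟨(-Complex.I*τ) ^ (1/2 : ℂ) * Complex.exp (-(Real.pi*Complex.I)/2),
    mul_ne_zero hpow (Complex.exp_ne_zero _), fun ξ => ?_⟩
  have h1 : (((0 : ℤ) : ℂ) * τ + ((-1 : ℤ) : ℂ)) / (((1 : ℤ) : ℂ) * τ + ((0 : ℤ) : ℂ))
      = -1 / τ := by push_cast; ring
  have h2 : ξ / (((1 : ℤ) : ℂ) * τ + ((0 : ℤ) : ℂ)) = ξ / τ := by push_cast; ring
  have h3 : Real.pi * Complex.I * ((1 : ℤ) : ℂ) * ξ ^ 2 / (((1 : ℤ) : ℂ) * τ + ((0 : ℤ) : ℂ))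
      = Real.pi * Complex.I * ξ ^ 2 / τ := by push_cast; ring
  rw [h1, h2, h3, theta_S τ hτ ξ]

lemma thetaLaw_all : ∀ a b c d : ℤ, a * d - b * c = 1 → ThetaLaw a b c d := by
  suffices H : ∀ n : ℕ, ∀ a b c d : ℤ, c.natAbs = n → a * d - b * c = 1 → ThetaLaw a b c d by
    intro a b c d h; exact H c.natAbs a b c d rfl h
  intro n
  induction n using Nat.strong_induction_on with
  | _ n ih =>
    intro a b c d hc h
    rcases eq_or_ne c 0 with rfl | hc0
    · have had : a * d = 1 := by linarith [h]
      rcases Int.eq_one_or_neg_one_of_mul_eq_one' had with ⟨rfl, rfl⟩ | ⟨rfl, rfl⟩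
      · exact thetaLaw_T b
      · exact thetaLaw_negT b
    · have hlt : (a / c * c - a).natAbs < n := by
        have h1 : a / c * c - a = -(a % c) := by rw [Int.emod_def]; ring
        have h2 : a % c < |c| := by rw [Int.abs_eq_natAbs]; exact Int.emod_lt _ hc0
        have h3 : 0 ≤ a % c := Int.emod_nonneg _ hc0
        rw [h1, Int.natAbs_neg]
        subst hc
        rw [Int.abs_eq_natAbs] at h2
        omega
      have hdet' : c * (a / c * d - b) - d * (a / c * c - a) = 1 := by linear_combination h
      have Hγ' : ThetaLaw c d (a / c * c - a) (a / c * d - b) :=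
        ih _ hlt c d _ _ rfl hdet'
      have H1 := ThetaLaw.mul (by norm_num) hdet' thetaLaw_S Hγ'
      have hdet1 : (0 * c + (-1) * (a / c * c - a)) * (1 * d + 0 * (a / c * d - b))
          - (0 * d + (-1) * (a / c * d - b)) * (1 * c + 0 * (a / c * c - a)) = 1 := by
        linear_combination h
      have H2 := ThetaLaw.mul (by norm_num : (1 : ℤ) * 1 - (a / c) * 0 = 1) hdet1
        (thetaLaw_T (a / c)) H1
      have ea : 1 * (0 * c + (-1) * (a / c * c - a)) + a / c * (1 * c + 0 * (a / c * c - a)) = a :=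
        by ring
      have eb : 1 * (0 * d + (-1) * (a / c * d - b)) + a / c * (1 * d + 0 * (a / c * d - b)) = b :=
        by ring
      have ec : 0 * (0 * c + (-1) * (a / c * c - a)) + 1 * (1 * c + 0 * (a / c * c - a)) = c :=
        by ring
      have ed : 0 * (0 * d + (-1) * (a / c * d - b)) + 1 * (1 * d + 0 * (a / c * d - b)) = d :=
        by ring
      rw [ea, eb, ec, ed] at H2
      exact H2

lemma theta_differentiable {τ : ℂ} (hτ : 0 < τ.im) : Differentiable ℂ (theta τ) := by
  have h : theta τ = fun ξ => Complex.exp (Real.pi * Complex.I * τ / 4 + Real.pi * Complex.I * ξ) *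
      jacobiTheta₂ (ξ + (τ + 1) / 2) τ := funext (theta_eq τ)
  rw [h]
  intro x
  apply DifferentiableAt.mul
  · apply DifferentiableAt.cexp
    fun_prop
  · exact (differentiableAt_jacobiTheta₂_fst (x + (τ + 1) / 2) hτ).comp x
      ((differentiable_id.add_const _).differentiableAt)

/-- Modular transformation of the Kronecker series: for `(a b; c d) ∈ SL₂(ℤ)`,
`F_{(aτ+b)/(cτ+d)}(ξ/(cτ+d), α/(cτ+d)) = (cτ+d)·e^{2πicξα/(cτ+d)}·F_τ(ξ, α)`,
whenever both Kronecker series values occurring are defined. -/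
theorem kronecker_modular (a b c d : ℤ) (habcd : a * d - b * c = 1)
    (τ ξ α : ℂ) (hτ : 0 < τ.im)
    (hξ : theta τ ξ ≠ 0) (hα : theta τ α ≠ 0)
    (hξ' : theta (((a : ℂ) * τ + b) / ((c : ℂ) * τ + d)) (ξ / ((c : ℂ) * τ + d)) ≠ 0)
    (hα' : theta (((a : ℂ) * τ + b) / ((c : ℂ) * τ + d)) (α / ((c : ℂ) * τ + d)) ≠ 0) :
    kronecker (((a : ℂ) * τ + b) / ((c : ℂ) * τ + d))
        (ξ / ((c : ℂ) * τ + d)) (α / ((c : ℂ) * τ + d)) =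
      ((c : ℂ) * τ + d) *
        Complex.exp (2 * Real.pi * Complex.I * c * ξ * α / ((c : ℂ) * τ + d)) *
        kronecker τ ξ α := by
  obtain ⟨μ, hμ, law⟩ := thetaLaw_all a b c d habcd τ hτ
  have hj : (c : ℂ) * τ + d ≠ 0 := denom_ne_zero' habcd hτ
  have hdiff := theta_differentiable hτ
  have hfun : theta (((a : ℂ) * τ + b) / ((c : ℂ) * τ + d)) = fun η => μ *
      (Complex.exp (Real.pi * Complex.I * c * (((c : ℂ) * τ + d) * η) ^ 2 / ((c : ℂ) * τ + d)) *
        theta τ (((c : ℂ) * τ + d) * η)) := by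
    funext η
    have hl := law (((c : ℂ) * τ + d) * η)
    rw [mul_div_cancel_left₀ η hj] at hl
    rw [hl]; ring
  have hexpfun : ∀ η : ℂ, Real.pi * Complex.I * c * (((c : ℂ) * τ + d) * η) ^ 2 /
      ((c : ℂ) * τ + d) = (Real.pi * Complex.I * c * ((c : ℂ) * τ + d)) * η ^ 2 := by
    intro η; field_simp
  have hEd : HasDerivAt (fun η : ℂ => Complex.exp (Real.pi * Complex.I * c *
      (((c : ℂ) * τ + d) * η) ^ 2 / ((c : ℂ) * τ + d))) 0 0 := by
    simp only [hexpfun]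
    have hpoly : HasDerivAt (fun η : ℂ => (Real.pi * Complex.I * c * ((c : ℂ) * τ + d)) * η ^ 2)
        0 0 := by
      simpa using (hasDerivAt_pow 2 (0 : ℂ)).const_mul (Real.pi * Complex.I * c * ((c : ℂ) * τ + d))
    simpa using hpoly.cexp
  have hTd : HasDerivAt (fun η : ℂ => theta τ (((c : ℂ) * τ + d) * η))
      (deriv (theta τ) 0 * ((c : ℂ) * τ + d)) 0 := by
    have h1 : HasDerivAt (theta τ) (deriv (theta τ) 0) (((c : ℂ) * τ + d) * 0) := by
      rw [mul_zero]; exact (hdiff 0).hasDerivAt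
    have h2 : HasDerivAt (fun η : ℂ => ((c : ℂ) * τ + d) * η) ((c : ℂ) * τ + d) 0 := by
      simpa using (hasDerivAt_id (0 : ℂ)).const_mul ((c : ℂ) * τ + d)
    exact h1.comp 0 h2
  have hD : deriv (theta (((a : ℂ) * τ + b) / ((c : ℂ) * τ + d))) 0
      = μ * (deriv (theta τ) 0 * ((c : ℂ) * τ + d)) := by
    rw [hfun]
    have hprod := ((hEd.mul hTd).const_mul μ).deriv
    simpa using hprod
  have hexp : Complex.exp (Real.pi * Complex.I * c * (ξ + α) ^ 2 / ((c : ℂ) * τ + d)) =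
      Complex.exp (2 * Real.pi * Complex.I * c * ξ * α / ((c : ℂ) * τ + d)) *
      Complex.exp (Real.pi * Complex.I * c * ξ ^ 2 / ((c : ℂ) * τ + d)) *
      Complex.exp (Real.pi * Complex.I * c * α ^ 2 / ((c : ℂ) * τ + d)) := by
    rw [← Complex.exp_add, ← Complex.exp_add]
    congr 1
    field_simp
    ring
  rw [kronecker, kronecker, hD, ← add_div, law ξ, law α, law (ξ + α), hexp]
  field_simp [hξ, hα, hμ, Complex.exp_ne_zero]

end
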